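/- Let v ∈ 𝒰(ℝ) be a threshold utility for which there exist a ∈ ℝ and an interval J ∈ {(a,∞), (−∞,a)} such that v restricted to J is three times continuously differentiable and the absolute risk aversion R_v^A is strictly monotone on J (either increasing throughout J or decreasing throughout J). Then for every Z ∈ 𝒳 that is not ℙ-a.s. constant there exists a₀ ∈ ℝ such that the base risk measure ρ_{Z+a₀,v} is not v-SD-consistent (hence not a v-Meyer risk measure). -/

import Mathlib

open MeasureTheory Filter Set

noncomputable section

namespace Paper

variable {Ω : Type*} [MeasurableSpace Ω]

/-- The probability measure `P` is atomless. -/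
def Atomless (P : Measure Ω) : Prop :=
  ∀ s : Set Ω, MeasurableSet s → 0 < P s →
    ∃ t : Set Ω, MeasurableSet t ∧ t ⊆ s ∧ 0 < P t ∧ P t < P s

/-- `𝒳`: the essentially bounded random variables. -/
def MemX (P : Measure Ω) (X : Ω → ℝ) : Prop :=
  Measurable X ∧ ∃ C : ℝ, ∀ᵐ ω ∂P, |X ω| ≤ C

/-- `𝒰(I)`: twice differentiable functions with everywhere positive first
derivative on `I`. -/
def IsUtility (I : Set ℝ) (u : ℝ → ℝ) : Prop :=
  (∀ x ∈ I, DifferentiableAt ℝ u x) ∧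
  (∀ x ∈ I, DifferentiableAt ℝ (deriv u) x) ∧
  (∀ x ∈ I, 0 < deriv u x)

/-- Arrow–Pratt coefficient of absolute risk aversion. -/
def RA (u : ℝ → ℝ) (x : ℝ) : ℝ := -deriv (deriv u) x / deriv u x

/-- `𝓛¹_v`: `I`-valued random variables `X` with `v(X)` integrable. -/
def MemL1 (P : Measure Ω) (I : Set ℝ) (v : ℝ → ℝ) (X : Ω → ℝ) : Prop :=
  Measurable X ∧ (∀ᵐ ω ∂P, X ω ∈ I) ∧ Integrable (fun ω => v (X ω)) P

/-- The `v`-SD order: `X ≤_{v-SD} Y`. -/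
def vSD (P : Measure Ω) (I : Set ℝ) (v : ℝ → ℝ) (X Y : Ω → ℝ) : Prop :=
  ∀ u : ℝ → ℝ, IsUtility I u → (∀ x ∈ I, RA v x ≤ RA u x) →
    Integrable (fun ω => u (X ω)) P → Integrable (fun ω => u (Y ω)) P →
    ∫ ω, u (X ω) ∂P ≤ ∫ ω, u (Y ω) ∂P

/-- Second-order stochastic dominance. -/
def SSD (P : Measure Ω) (X Y : Ω → ℝ) : Prop :=
  ∀ u : ℝ → ℝ, IsUtility Set.univ u → ConcaveOn ℝ Set.univ u →
    Integrable (fun ω => u (X ω)) P → Integrable (fun ω => u (Y ω)) P →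
    ∫ ω, u (X ω) ∂P ≤ ∫ ω, u (Y ω) ∂P

/-- Monetary risk measure: antitone and cash-additive on `𝒳`. -/
def IsRiskMeasure (P : Measure Ω) (ρ : (Ω → ℝ) → ℝ) : Prop :=
  (∀ X Y : Ω → ℝ, MemX P X → MemX P Y → (∀ᵐ ω ∂P, X ω ≤ Y ω) → ρ Y ≤ ρ X) ∧
  (∀ X : Ω → ℝ, MemX P X → ∀ c : ℝ, ρ (fun ω => X ω + c) = ρ X - c)

/-- Worst-case risk measure `ρ^w(X) = ess sup (-X)`. -/
def rhoW (P : Measure Ω) (X : Ω → ℝ) : ℝ :=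
  sInf {m : ℝ | ∀ᵐ ω ∂P, -X ω ≤ m}

/-- `v`-SD-consistency of `φ` on the domain `D`. -/
def VSDConsistent (P : Measure Ω) (I : Set ℝ) (v : ℝ → ℝ)
    (D : Set (Ω → ℝ)) (φ : (Ω → ℝ) → ℝ) : Prop :=
  ∀ X Y : Ω → ℝ, X ∈ D → Y ∈ D → MemL1 P I v X → MemL1 P I v Y →
    vSD P I v X Y → φ Y ≤ φ X

/-- `𝒞`: the a.s. strictly positive bounded random variables. -/
def MemC (P : Measure Ω) (X : Ω → ℝ) : Prop :=
  MemX P X ∧ ∀ᵐ ω ∂P, 0 < X ω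

/-- `𝓔 = {e^Y : Y ∈ 𝒳}` (up to a.s. equality). -/
def MemE (P : Measure Ω) (X : Ω → ℝ) : Prop :=
  ∃ Y : Ω → ℝ, MemX P Y ∧ ∀ᵐ ω ∂P, X ω = Real.exp (Y ω)

/-- Return risk measure. -/
def IsRRM (P : Measure Ω) (η : (Ω → ℝ) → ℝ) : Prop :=
  (∀ X : Ω → ℝ, MemC P X → 0 < η X) ∧
  (∀ X Y : Ω → ℝ, MemC P X → MemC P Y → (∀ᵐ ω ∂P, X ω ≤ Y ω) → η Y ≤ η X) ∧
  (∀ X : Ω → ℝ, MemC P X → ∀ t : ℝ, 0 < t → η (fun ω => t * X ω) = t⁻¹ * η X)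

/-- Loss-based return risk measure. -/
def IsLossRRM (P : Measure Ω) (κ : (Ω → ℝ) → ℝ) : Prop :=
  (∀ L : Ω → ℝ, MemC P L → 0 < κ L) ∧
  (∀ L L' : Ω → ℝ, MemC P L → MemC P L' → (∀ᵐ ω ∂P, L' ω ≤ L ω) → κ L' ≤ κ L) ∧
  (∀ L : Ω → ℝ, MemC P L → ∀ t : ℝ, 0 < t → κ (fun ω => t * L ω) = t * κ L)

/-- Base risk measure `ρ_{Z,v}`. -/
def baseRM (P : Measure Ω) (v : ℝ → ℝ) (Z X : Ω → ℝ) : ℝ :=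
  sInf {m : ℝ | vSD P Set.univ v Z (fun ω => X ω + m)}

/-- Lower quantile function. -/
def qf (P : Measure Ω) (X : Ω → ℝ) (r : ℝ) : ℝ :=
  sInf {x : ℝ | r ≤ (P {ω | X ω ≤ x}).toReal}

/-- Expected Shortfall at level `p`. -/
def ES (P : Measure Ω) (p : ℝ) (X : Ω → ℝ) : ℝ :=
  if p < 1 then -(1 / (1 - p)) * ∫ r in (0:ℝ)..(1 - p), qf P X r
  else rhoW P X

/-! ### Auxiliary lemmas for Statement 12 -/

lemma IsUtility.diff {v : ℝ → ℝ} (hv : IsUtility Set.univ v) : ∀ x, DifferentiableAt ℝ v x :=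
  fun x => hv.1 x (Set.mem_univ x)
lemma IsUtility.diff2 {v : ℝ → ℝ} (hv : IsUtility Set.univ v) :
    ∀ x, DifferentiableAt ℝ (deriv v) x := fun x => hv.2.1 x (Set.mem_univ x)
lemma IsUtility.pos {v : ℝ → ℝ} (hv : IsUtility Set.univ v) : ∀ x, 0 < deriv v x :=
  fun x => hv.2.2 x (Set.mem_univ x)
lemma IsUtility.mono {v : ℝ → ℝ} (hv : IsUtility Set.univ v) : StrictMono v :=
  strictMono_of_deriv_pos hv.pos
lemma IsUtility.cont {v : ℝ → ℝ} (hv : IsUtility Set.univ v) : Continuous v :=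
  Differentiable.continuous fun x => hv.diff x

lemma integrable_comp_bdd (P : Measure Ω) [IsProbabilityMeasure P] {f : ℝ → ℝ}
    (hf : Continuous f) {X : Ω → ℝ} (hX : Measurable X) {lo hi : ℝ}
    (hb : ∀ᵐ ω ∂P, X ω ∈ Set.Icc lo hi) :
    Integrable (fun ω => f (X ω)) P := by
  obtain ⟨B, hB⟩ := (isCompact_Icc (a := lo) (b := hi)).exists_bound_of_continuousOn
    hf.continuousOn
  refine (integrable_const B).mono' ((hf.measurable.comp hX).aestronglyMeasurable) ?_
  filter_upwards [hb] with ω hω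
  simpa using hB _ hω

lemma support_line {u v : ℝ → ℝ} (hu : IsUtility Set.univ u) (hv : IsUtility Set.univ v)
    (hRA : ∀ x, RA v x ≤ RA u x) (c x : ℝ) :
    u x ≤ u c + (deriv u c / deriv v c) * (v x - v c) := by
  set w : ℝ → ℝ := fun y => deriv u y / deriv v y with hw
  have hwd : ∀ y, DifferentiableAt ℝ w y := fun y =>
    (hu.diff2 y).div (hv.diff2 y) (hv.pos y).ne'
  have hwle : ∀ y, deriv w y ≤ 0 := by
    intro y
    have h := hRA y
    rw [RA, RA, div_le_div_iff₀ (hv.pos y) (hu.pos y)] at h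
    rw [hw]
    rw [deriv_fun_div (hu.diff2 y) (hv.diff2 y) (hv.pos y).ne']
    apply div_nonpos_of_nonpos_of_nonneg _ (by positivity)
    nlinarith
  have hwanti : Antitone w := antitone_of_deriv_nonpos (fun y => hwd y) hwle
  set lam := w c with hlam
  have hder : ∀ y, HasDerivAt (fun z => u z - lam * v z) (deriv u y - lam * deriv v y) y :=
    fun y => ((hu.diff y).hasDerivAt).sub (((hv.diff y).hasDerivAt).const_mul lam)
  have hcont : Continuous fun z => u z - lam * v z :=
    (hu.cont).sub (continuous_const.mul hv.cont)
  have key : u x - lam * v x ≤ u c - lam * v c := by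
    rcases le_total x c with hxc | hcx
    · have hm : MonotoneOn (fun z => u z - lam * v z) (Set.Iic c) := by
        apply monotoneOn_of_deriv_nonneg (convex_Iic c) hcont.continuousOn
          (fun y _ => ((hder y).differentiableAt).differentiableWithinAt)
        intro y hy
        rw [(hder y).deriv]
        rw [interior_Iic] at hy
        have h1 : lam ≤ w y := hwanti (le_of_lt hy)
        have h2 := (le_div_iff₀ (hv.pos y)).mp h1
        linarith
      exact hm (Set.mem_Iic.mpr hxc) (Set.mem_Iic.mpr le_rfl) hxc
    · have hm : AntitoneOn (fun z => u z - lam * v z) (Set.Ici c) := by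
        apply antitoneOn_of_deriv_nonpos (convex_Ici c) hcont.continuousOn
          (fun y _ => ((hder y).differentiableAt).differentiableWithinAt)
        intro y hy
        rw [(hder y).deriv]
        rw [interior_Ici] at hy
        have h1 : w y ≤ lam := hwanti (le_of_lt hy)
        have h2 := (div_le_iff₀ (hv.pos y)).mp h1
        linarith
      exact hm (Set.mem_Ici.mpr le_rfl) (Set.mem_Ici.mpr hcx) hcx
  have : lam = deriv u c / deriv v c := rfl
  nlinarith [key]

lemma vSD_to_const {P : Measure Ω} [IsProbabilityMeasure P] {v : ℝ → ℝ}
    (hv : IsUtility Set.univ v) {X : Ω → ℝ}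
    (hvX : Integrable (fun ω => v (X ω)) P) {c : ℝ}
    (hc : ∫ ω, v (X ω) ∂P = v c) :
    vSD P Set.univ v X (fun _ => c) := by
  intro u hu hRA hIX hIY
  set lam := deriv u c / deriv v c with hlam
  have hline : ∀ ω, u (X ω) ≤ u c + lam * (v (X ω) - v c) :=
    fun ω => support_line hu hv (fun x => hRA x (Set.mem_univ x)) c (X ω)
  have hsub : Integrable (fun ω => v (X ω) - v c) P := hvX.sub (integrable_const _)
  have hmul : Integrable (fun ω => lam * (v (X ω) - v c)) P := hsub.const_mul lam
  have hInt2 : Integrable (fun ω => u c + lam * (v (X ω) - v c)) P :=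
    (integrable_const _).add hmul
  have h1 : ∫ ω, u (X ω) ∂P ≤ ∫ ω, (u c + lam * (v (X ω) - v c)) ∂P :=
    integral_mono_ae hIX hInt2 (Filter.Eventually.of_forall hline)
  have h2 : ∫ ω, (u c + lam * (v (X ω) - v c)) ∂P = u c := by
    rw [integral_add (integrable_const _) hmul,
      integral_const, integral_const_mul, integral_sub hvX (integrable_const _),
      integral_const, hc]
    simp
  have h3 : ∫ ω, u ((fun _ => c) ω) ∂P = u c := by simp
  rw [h3]
  exact h1.trans (le_of_eq h2)

lemma vSD_of_ae_le {P : Measure Ω} {X Y : Ω → ℝ} {v : ℝ → ℝ}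
    (h : ∀ᵐ ω ∂P, X ω ≤ Y ω) : vSD P Set.univ v X Y := by
  intro u hu _ hIX hIY
  refine integral_mono_ae hIX hIY ?_
  filter_upwards [h] with ω hω
  exact (strictMono_of_deriv_pos (fun x => hu.2.2 x (Set.mem_univ x))).monotone hω

lemma strict_min_of_deriv {f : ℝ → ℝ} (hfc : Continuous f) {m M c : ℝ}
    (hc : c ∈ Set.Icc m M)
    (hneg : ∀ x ∈ Set.Ioo m M, x < c → deriv f x < 0)
    (hpos : ∀ x ∈ Set.Ioo m M, c < x → 0 < deriv f x) :
    ∀ x ∈ Set.Icc m M, x ≠ c → f c < f x := by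
  have h1 : StrictMonoOn f (Set.Icc c M) := by
    apply strictMonoOn_of_deriv_pos (convex_Icc c M) hfc.continuousOn
    intro x hx
    rw [interior_Icc] at hx
    exact hpos x ⟨lt_of_le_of_lt hc.1 hx.1, hx.2⟩ hx.1
  have h2 : StrictAntiOn f (Set.Icc m c) := by
    apply strictAntiOn_of_deriv_neg (convex_Icc m c) hfc.continuousOn
    intro x hx
    rw [interior_Icc] at hx
    exact hneg x ⟨hx.1, lt_of_lt_of_le hx.2 hc.2⟩ hx.2
  intro x hx hne
  rcases hne.lt_or_gt with h | h
  · exact h2 ⟨hx.1, h.le⟩ ⟨hc.1, le_rfl⟩ h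
  · exact h1 ⟨le_rfl, hc.2⟩ ⟨h.le, hx.2⟩ h

lemma lt_integral_of_strict_min {P : Measure Ω} [IsProbabilityMeasure P]
    {W : Ω → ℝ} (hW : Measurable W) {m M : ℝ} (hbW : ∀ᵐ ω ∂P, W ω ∈ Set.Icc m M)
    (hnc : ¬ ∃ r : ℝ, ∀ᵐ ω ∂P, W ω = r) {f : ℝ → ℝ} (hfc : Continuous f)
    {c : ℝ} (hmin : ∀ x ∈ Set.Icc m M, x ≠ c → f c < f x) :
    f c < ∫ ω, f (W ω) ∂P := by
  have hInt : Integrable (fun ω => f (W ω)) P := integrable_comp_bdd P hfc hW hbW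
  have hg0 : ∀ᵐ ω ∂P, 0 ≤ f (W ω) - f c := by
    filter_upwards [hbW] with ω hω
    rcases eq_or_ne (W ω) c with h | h
    · simp [h]
    · linarith [hmin _ hω h]
  have hgi : Integrable (fun ω => f (W ω) - f c) P := hInt.sub (integrable_const _)
  have hne : ¬ (∫ ω, (f (W ω) - f c) ∂P = 0) := by
    intro h0
    have hz := (integral_eq_zero_iff_of_nonneg_ae hg0 hgi).mp h0
    apply hnc
    refine ⟨c, ?_⟩
    filter_upwards [hz, hbW] with ω h1 h2
    by_contra hne2
    have := hmin _ h2 hne2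
    simp only [Pi.zero_apply] at h1
    linarith
  have hge : 0 ≤ ∫ ω, (f (W ω) - f c) ∂P := integral_nonneg_of_ae hg0
  have hlt : 0 < ∫ ω, (f (W ω) - f c) ∂P := lt_of_le_of_ne hge (Ne.symm hne)
  rw [integral_sub hInt (integrable_const _), integral_const] at hlt
  simp only [probReal_univ, one_smul, smul_eq_mul] at hlt
  linarith

lemma not_consistent {P : Measure Ω} [IsProbabilityMeasure P]
    {v : ℝ → ℝ} (hv : IsUtility Set.univ v)
    {Z' X : Ω → ℝ} (hXm : Measurable X)
    {mz Mz mx Mx : ℝ}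
    (hbZ : ∀ᵐ ω ∂P, Z' ω ∈ Set.Icc mz Mz) (hbX : ∀ᵐ ω ∂P, X ω ∈ Set.Icc mx Mx)
    (hX : MemX P X)
    {t : ℝ} (hXt : ∀ ω, X ω + t = Z' ω)
    {cX cZ : ℝ} (hcX : ∫ ω, v (X ω) ∂P = v cX) (hcZ : ∫ ω, v (Z' ω) ∂P = v cZ)
    (hgap : t < cZ - cX) :
    ¬ VSDConsistent P Set.univ v {X | MemX P X} (baseRM P v Z') := by
  intro hcons
  have hvmono := hv.mono
  have hvcont := hv.cont
  have hZm : Measurable Z' := by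
    have : Z' = fun ω => X ω + t := (funext hXt).symm
    rw [this]; exact hXm.add_const t
  have hvZ : Integrable (fun ω => v (Z' ω)) P := integrable_comp_bdd P hvcont hZm hbZ
  have hvX : Integrable (fun ω => v (X ω)) P := integrable_comp_bdd P hvcont hXm hbX
  set Y : Ω → ℝ := fun _ => cX with hY
  have h1 : vSD P Set.univ v X Y := vSD_to_const hv hvX hcX
  have hYX : MemX P Y :=
    ⟨measurable_const, ⟨|cX|, Filter.Eventually.of_forall (fun ω => le_refl _)⟩⟩
  have hL1X : MemL1 P Set.univ v X :=
    ⟨hXm, Filter.Eventually.of_forall (fun _ => Set.mem_univ _), hvX⟩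
  have hL1Y : MemL1 P Set.univ v Y :=
    ⟨measurable_const, Filter.Eventually.of_forall (fun _ => Set.mem_univ _),
      by rw [hY]; exact integrable_const (v cX)⟩
  have hmain : baseRM P v Z' Y ≤ baseRM P v Z' X := hcons X Y hX hYX hL1X hL1Y h1
  -- upper bound for `baseRM P v Z' X`
  have hSXmem : t ∈ {m : ℝ | vSD P Set.univ v Z' (fun ω => X ω + m)} := by
    have heq : (fun ω => X ω + t) = Z' := funext hXt
    rw [Set.mem_setOf_eq, heq]
    intro u hu hRA hI1 hI2
    exact le_rfl
  have hSXbdd : BddBelow {m : ℝ | vSD P Set.univ v Z' (fun ω => X ω + m)} := by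
    refine ⟨mz - Mx, fun m hm => ?_⟩
    have hbXm : ∀ᵐ ω ∂P, X ω + m ∈ Set.Icc (mx + m) (Mx + m) := by
      filter_upwards [hbX] with ω h
      exact ⟨by linarith [h.1], by linarith [h.2]⟩
    have hIm : Integrable (fun ω => v (X ω + m)) P :=
      integrable_comp_bdd P hvcont (hXm.add_const m) hbXm
    have hle : ∫ ω, v (Z' ω) ∂P ≤ ∫ ω, v (X ω + m) ∂P :=
      hm v hv (fun x _ => le_rfl) hvZ hIm
    have hlo : v mz ≤ ∫ ω, v (Z' ω) ∂P := by
      have := integral_mono_ae (integrable_const (v mz)) hvZ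
        (by filter_upwards [hbZ] with ω h; exact hvmono.monotone h.1)
      simpa using this
    have hhi : ∫ ω, v (X ω + m) ∂P ≤ v (Mx + m) := by
      have := integral_mono_ae hIm (integrable_const (v (Mx + m)))
        (by filter_upwards [hbX] with ω h; exact hvmono.monotone (by linarith [h.2]))
      simpa using this
    have hvv : v mz ≤ v (Mx + m) := le_trans hlo (le_trans hle hhi)
    have := hvmono.le_iff_le.mp hvv
    linarith
  have hup : baseRM P v Z' X ≤ t := csInf_le hSXbdd hSXmem
  -- lower bound for `baseRM P v Z' Y`
  have hSYne : {m : ℝ | vSD P Set.univ v Z' (fun ω => Y ω + m)}.Nonempty := by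
    refine ⟨Mz - cX, ?_⟩
    rw [Set.mem_setOf_eq]
    apply vSD_of_ae_le
    filter_upwards [hbZ] with ω h
    simp only [hY]
    linarith [h.2]
  have hlow : cZ - cX ≤ baseRM P v Z' Y := by
    apply le_csInf hSYne
    intro m hm
    have hIm : Integrable (fun ω => v (Y ω + m)) P := by
      rw [hY]; exact integrable_const (v (cX + m))
    have hle : ∫ ω, v (Z' ω) ∂P ≤ ∫ ω, v (Y ω + m) ∂P :=
      hm v hv (fun x _ => le_rfl) hvZ hIm
    have h2 : ∫ ω, v (Y ω + m) ∂P = v (cX + m) := by simp [hY]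
    rw [h2, hcZ] at hle
    have := hvmono.le_iff_le.mp hle
    linarith
  linarith
/-- Suppose `v ∈ 𝒰(ℝ)` is three times continuously
differentiable on an interval `J = (a, ∞)` or `J = (-∞, a)` on which `R_v^A` is
strictly increasing or strictly decreasing. Then for every `Z ∈ 𝒳` that is not
a.s. constant there is `a₀ ∈ ℝ` such that the base risk measure `ρ_{Z + a₀, v}`
is not `v`-SD-consistent. -/
theorem statement12 (P : Measure Ω) [IsProbabilityMeasure P] (hP : Atomless P)
    (v : ℝ → ℝ) (hv : IsUtility Set.univ v)
    (a : ℝ) (J : Set ℝ) (hJ : J = Set.Ioi a ∨ J = Set.Iio a)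
    (hsmooth : ContDiffOn ℝ 3 v J)
    (hmono : StrictMonoOn (RA v) J ∨ StrictAntiOn (RA v) J) :
    ∀ Z : Ω → ℝ, MemX P Z → ¬ (∃ r : ℝ, ∀ᵐ ω ∂P, Z ω = r) →
      ∃ a₀ : ℝ, ¬ VSDConsistent P Set.univ v {X | MemX P X}
        (baseRM P v (fun ω => Z ω + a₀)) := by
  intro Z hZ hnc
  obtain ⟨hZm, C₀, hC₀⟩ := hZ
  set C := max C₀ 0 with hCdef
  have hCnn : (0:ℝ) ≤ C := le_max_right _ _
  have hZC : ∀ᵐ ω ∂P, |Z ω| ≤ C := by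
    filter_upwards [hC₀] with ω h; exact h.trans (le_max_left _ _)
  obtain ⟨b, hb⟩ : ∃ b : ℝ, Set.Icc (b - C) (b + C + 1) ⊆ J := by
    rcases hJ with h | h
    · refine ⟨a + C + 1, ?_⟩
      rw [h]; intro x hx
      have := hx.1; simp only [Set.mem_Ioi]; linarith
    · refine ⟨a - 2*C - 2, ?_⟩
      rw [h]; intro x hx
      have := hx.2; simp only [Set.mem_Iio]; linarith
  set W : Ω → ℝ := fun ω => Z ω + b with hW
  have hWm : Measurable W := hZm.add_const b
  have hmM : b - C ≤ b + C := by linarith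
  have hbW : ∀ᵐ ω ∂P, W ω ∈ Set.Icc (b - C) (b + C) := by
    filter_upwards [hZC] with ω h
    obtain ⟨h1, h2⟩ := abs_le.mp h
    refine ⟨?_, ?_⟩ <;> simp only [hW] <;> linarith
  have hbW1 : ∀ᵐ ω ∂P, W ω + 1 ∈ Set.Icc (b - C + 1) (b + C + 1) := by
    filter_upwards [hbW] with ω h
    exact ⟨by linarith [h.1], by linarith [h.2]⟩
  have hMemW : MemX P W := by
    refine ⟨hWm, C + |b|, ?_⟩
    filter_upwards [hZC] with ω h
    simp only [hW]
    calc |Z ω + b| ≤ |Z ω| + |b| := abs_add_le _ _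
      _ ≤ C + |b| := by linarith
  have hMemW1 : MemX P (fun ω => W ω + 1) := by
    refine ⟨hWm.add_const 1, C + |b| + 1, ?_⟩
    filter_upwards [hZC] with ω h
    simp only [hW]
    calc |Z ω + b + 1| ≤ |Z ω| + |b| + |1| := by
          calc |Z ω + b + 1| ≤ |Z ω + b| + |1| := abs_add_le _ _
            _ ≤ |Z ω| + |b| + |1| := by linarith [abs_add_le (Z ω) b]
      _ ≤ C + |b| + 1 := by simp; linarith
  have hncW : ¬ ∃ r : ℝ, ∀ᵐ ω ∂P, W ω = r := by
    rintro ⟨r, hr⟩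
    refine hnc ⟨r - b, ?_⟩
    filter_upwards [hr] with ω h
    simp only [hW] at h
    linarith
  have hvW : Integrable (fun ω => v (W ω)) P := integrable_comp_bdd P hv.cont hWm hbW
  have hvW1 : Integrable (fun ω => v (W ω + 1)) P :=
    integrable_comp_bdd P hv.cont (hWm.add_const 1) hbW1
  have hmean : ∫ ω, v (W ω) ∂P ∈ Set.Icc (v (b - C)) (v (b + C)) := by
    constructor
    · have := integral_mono_ae (integrable_const (v (b - C))) hvW
        (by filter_upwards [hbW] with ω h; exact hv.mono.monotone h.1)
      simpa using this
    · have := integral_mono_ae hvW (integrable_const (v (b + C)))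
        (by filter_upwards [hbW] with ω h; exact hv.mono.monotone h.2)
      simpa using this
  obtain ⟨c, hcmem, hceq⟩ := intermediate_value_Icc hmM hv.cont.continuousOn hmean
  have hmean1 : ∫ ω, v (W ω + 1) ∂P ∈ Set.Icc (v (b - C + 1)) (v (b + C + 1)) := by
    constructor
    · have := integral_mono_ae (integrable_const (v (b - C + 1))) hvW1
        (by filter_upwards [hbW1] with ω h; exact hv.mono.monotone h.1)
      simpa using this
    · have := integral_mono_ae hvW1 (integrable_const (v (b + C + 1)))
        (by filter_upwards [hbW1] with ω h; exact hv.mono.monotone h.2)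
      simpa using this
  obtain ⟨c2, hc2mem, hc2eq⟩ :=
    intermediate_value_Icc (by linarith : b - C + 1 ≤ b + C + 1) hv.cont.continuousOn hmean1
  -- the likelihood-ratio-type function
  set w2 : ℝ → ℝ := fun x => deriv v (x + 1) / deriv v x with hw2
  have hdvc : Continuous (deriv v) := Differentiable.continuous fun x => hv.diff2 x
  have hw2c : Continuous w2 := by
    rw [hw2]
    exact (hdvc.comp (continuous_id.add continuous_const)).div hdvc fun x => (hv.pos x).ne'
  have hdv1 : ∀ x : ℝ, HasDerivAt (fun y => deriv v (y + 1)) (deriv (deriv v) (x + 1)) x := by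
    intro x
    have h1 := ((hv.diff2 (x + 1)).hasDerivAt).comp x ((hasDerivAt_id x).add_const 1)
    simpa [Function.comp_def] using h1
  have hw2d : ∀ x, HasDerivAt w2
      ((deriv (deriv v) (x + 1) * deriv v x - deriv v (x + 1) * deriv (deriv v) x)
        / (deriv v x) ^ 2) x := by
    rw [hw2]
    exact fun x => (hdv1 x).div ((hv.diff2 x).hasDerivAt) (hv.pos x).ne'
  have hw2val : ∀ x : ℝ, deriv v (x + 1) = w2 x * deriv v x := by
    intro x
    rw [hw2]
    exact (div_mul_cancel₀ _ (hv.pos x).ne').symm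
  have hv1d : ∀ x : ℝ, HasDerivAt (fun y => v (y + 1)) (deriv v (x + 1)) x := by
    intro x
    have h1 := ((hv.diff (x + 1)).hasDerivAt).comp x ((hasDerivAt_id x).add_const 1)
    simpa [Function.comp_def] using h1
  have hJx : ∀ x ∈ Set.Ioo (b - C) (b + C), x ∈ J ∧ x + 1 ∈ J := by
    intro x hx
    exact ⟨hb ⟨hx.1.le, by linarith [hx.2]⟩, hb ⟨by linarith [hx.1], by linarith [hx.2]⟩⟩
  rcases hmono with hinc | hdec
  · -- RA strictly increasing: c2 < c + 1, shift `Z` by `b`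
    have hw2anti : StrictAntiOn w2 (Set.Icc (b - C) (b + C)) := by
      apply strictAntiOn_of_deriv_neg (convex_Icc _ _) hw2c.continuousOn
      intro x hx
      rw [interior_Icc] at hx
      obtain ⟨hxJ, hx1J⟩ := hJx x hx
      have hRAlt : RA v x < RA v (x + 1) := hinc hxJ hx1J (by linarith)
      rw [(hw2d x).deriv]
      apply div_neg_of_neg_of_pos _ (pow_pos (hv.pos x) 2)
      rw [RA, RA, div_lt_div_iff₀ (hv.pos x) (hv.pos (x + 1))] at hRAlt
      nlinarith
    set lam := w2 c with hlam
    set f : ℝ → ℝ := fun x => lam * v x - v (x + 1) with hf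
    have hfc : Continuous f := by
      rw [hf]
      exact (continuous_const.mul hv.cont).sub (hv.cont.comp (continuous_id.add continuous_const))
    have hfd : ∀ x, HasDerivAt f (lam * deriv v x - deriv v (x + 1)) x := by
      rw [hf]
      exact fun x => (((hv.diff x).hasDerivAt).const_mul lam).sub (hv1d x)
    have hmin : ∀ x ∈ Set.Icc (b - C) (b + C), x ≠ c → f c < f x := by
      apply strict_min_of_deriv hfc hcmem
      · intro x hx hxc
        rw [(hfd x).deriv]
        have h1 : w2 c < w2 x := hw2anti ⟨hx.1.le, hx.2.le⟩ hcmem hxc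
        have h2 := hw2val x
        nlinarith [hv.pos x]
      · intro x hx hcx
        rw [(hfd x).deriv]
        have h1 : w2 x < w2 c := hw2anti hcmem ⟨hx.1.le, hx.2.le⟩ hcx
        have h2 := hw2val x
        nlinarith [hv.pos x]
    have hstrict : f c < ∫ ω, f (W ω) ∂P :=
      lt_integral_of_strict_min hWm hbW hncW hfc hmin
    have hsplit : ∫ ω, f (W ω) ∂P = lam * v c - v c2 := by
      simp only [hf]
      rw [integral_sub (hvW.const_mul lam) hvW1, integral_const_mul, ← hceq, ← hc2eq]
    have hfval : f c = lam * v c - v (c + 1) := by rw [hf]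
    have hkey : c2 < c + 1 := by
      apply hv.mono.lt_iff_lt.mp
      linarith
    refine ⟨b, ?_⟩
    rw [← hW]
    refine not_consistent (t := -1) (cX := c2) (cZ := c) hv (hWm.add_const 1)
      hbW hbW1 hMemW1 (fun ω => by ring) hc2eq.symm hceq.symm (by linarith)
  · -- RA strictly decreasing: c + 1 < c2, shift `Z` by `b + 1`
    have hw2mono : StrictMonoOn w2 (Set.Icc (b - C) (b + C)) := by
      apply strictMonoOn_of_deriv_pos (convex_Icc _ _) hw2c.continuousOn
      intro x hx
      rw [interior_Icc] at hx
      obtain ⟨hxJ, hx1J⟩ := hJx x hx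
      have hRAlt : RA v (x + 1) < RA v x := hdec hxJ hx1J (by linarith)
      rw [(hw2d x).deriv]
      apply div_pos _ (pow_pos (hv.pos x) 2)
      rw [RA, RA, div_lt_div_iff₀ (hv.pos (x + 1)) (hv.pos x)] at hRAlt
      nlinarith
    set lam := w2 c with hlam
    set f : ℝ → ℝ := fun x => v (x + 1) - lam * v x with hf
    have hfc : Continuous f := by
      rw [hf]
      exact (hv.cont.comp (continuous_id.add continuous_const)).sub (continuous_const.mul hv.cont)
    have hfd : ∀ x, HasDerivAt f (deriv v (x + 1) - lam * deriv v x) x := by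
      rw [hf]
      exact fun x => (hv1d x).sub (((hv.diff x).hasDerivAt).const_mul lam)
    have hmin : ∀ x ∈ Set.Icc (b - C) (b + C), x ≠ c → f c < f x := by
      apply strict_min_of_deriv hfc hcmem
      · intro x hx hxc
        rw [(hfd x).deriv]
        have h1 : w2 x < w2 c := hw2mono ⟨hx.1.le, hx.2.le⟩ hcmem hxc
        have h2 := hw2val x
        nlinarith [hv.pos x]
      · intro x hx hcx
        rw [(hfd x).deriv]
        have h1 : w2 c < w2 x := hw2mono hcmem ⟨hx.1.le, hx.2.le⟩ hcx
        have h2 := hw2val x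
        nlinarith [hv.pos x]
    have hstrict : f c < ∫ ω, f (W ω) ∂P :=
      lt_integral_of_strict_min hWm hbW hncW hfc hmin
    have hsplit : ∫ ω, f (W ω) ∂P = v c2 - lam * v c := by
      simp only [hf]
      rw [integral_sub hvW1 (hvW.const_mul lam), integral_const_mul, ← hceq, ← hc2eq]
    have hfval : f c = v (c + 1) - lam * v c := by rw [hf]
    have hkey : c + 1 < c2 := by
      apply hv.mono.lt_iff_lt.mp
      linarith
    refine ⟨b + 1, ?_⟩
    have hZeq : (fun ω => Z ω + (b + 1)) = fun ω => W ω + 1 := by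
      funext ω; simp only [hW]; ring
    rw [hZeq]
    refine not_consistent (t := 1) (cX := c) (cZ := c2) hv hWm
      hbW1 hbW hMemW (fun ω => rfl) hceq.symm hc2eq.symm (by linarith)

end Paper
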